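/- arXiv:2011.14781 — 4 statements merged into one kernel-verified Lean document; each statement's English description precedes it below -/
import Mathlib

section
/- For X in the Stiefel manifold (X^T X = I_p) and any matrix G in R^{n×p}, the squared Frobenius norm of G - X G^T X equals the squared Frobenius norm of (I_n - X X^T) G plus the squared Frobenius norm of X^T G - G^T X. -/
open Matrix BigOperators

noncomputable def frobSq {m n : Type*} [Fintype m] [Fintype n] (A : Matrix m n ℝ) : ℝ :=
  ∑ i, ∑ j, (A i j) ^ 2

lemma frobSq_eq_trace {m n : Type*} [Fintype m] [Fintype n] (A : Matrix m n ℝ) :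
    frobSq A = (Aᵀ * A).trace := by
  simp only [frobSq, Matrix.trace, Matrix.diag, Matrix.mul_apply, Matrix.transpose_apply]
  rw [Finset.sum_comm]
  simp [sq]

theorem stmt_0 (n p : ℕ) (X G : Matrix (Fin n) (Fin p) ℝ) (hX : Xᵀ * X = 1) :
    frobSq (G - X * Gᵀ * X) =
      frobSq ((1 - X * Xᵀ) * G) + frobSq (Xᵀ * G - Gᵀ * X) := by
  rw [frobSq_eq_trace, frobSq_eq_trace, frobSq_eq_trace]
  have h1 : ((G - X * Gᵀ * X)ᵀ * (G - X * Gᵀ * X)).trace =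
      (Gᵀ * G).trace - (Gᵀ * (X * Gᵀ * X)).trace - (Xᵀ * G * Xᵀ * G).trace
        + (Xᵀ * G * Gᵀ * X).trace := by
    simp only [Matrix.transpose_sub, Matrix.transpose_mul, Matrix.transpose_transpose,
      Matrix.sub_mul, Matrix.mul_sub, Matrix.trace_sub]
    have key : Xᵀ * G * Xᵀ * (X * Gᵀ * X) = Xᵀ * G * Gᵀ * X := by
      calc Xᵀ * G * Xᵀ * (X * Gᵀ * X) = Xᵀ * G * (Xᵀ * X) * (Gᵀ * X) := by
            simp only [Matrix.mul_assoc]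
        _ = Xᵀ * G * Gᵀ * X := by rw [hX]; simp only [Matrix.mul_one, Matrix.mul_assoc]
    simp only [Matrix.transpose_transpose, Matrix.mul_assoc] at key ⊢
    rw [key]
    ring
  have sqP : (1 - X * Xᵀ) * (1 - X * Xᵀ) = 1 - X * Xᵀ := by
    have : X * Xᵀ * (X * Xᵀ) = X * Xᵀ := by
      calc X * Xᵀ * (X * Xᵀ) = X * (Xᵀ * X) * Xᵀ := by simp only [Matrix.mul_assoc]
        _ = X * Xᵀ := by rw [hX]; simp [Matrix.mul_assoc]
    simp only [Matrix.mul_sub, Matrix.sub_mul, Matrix.one_mul, Matrix.mul_one, this]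
    abel
  have h2 : (((1 - X * Xᵀ) * G)ᵀ * ((1 - X * Xᵀ) * G)).trace =
      (Gᵀ * G).trace - (Xᵀ * G * Gᵀ * X).trace := by
    have : ((1 - X * Xᵀ) * G)ᵀ * ((1 - X * Xᵀ) * G) = Gᵀ * G - Gᵀ * X * (Xᵀ * G) := by
      rw [Matrix.transpose_mul]
      have ht : ((1 : Matrix (Fin n) (Fin n) ℝ) - X * Xᵀ)ᵀ = 1 - X * Xᵀ := by
        simp [Matrix.transpose_sub, Matrix.transpose_mul]
      rw [ht, Matrix.mul_assoc Gᵀ, ← Matrix.mul_assoc (1 - X * Xᵀ), sqP]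
      simp only [Matrix.mul_sub, Matrix.sub_mul, Matrix.one_mul, Matrix.mul_assoc]
    rw [this, Matrix.trace_sub, Matrix.trace_mul_comm (Gᵀ * X) (Xᵀ * G),
      Matrix.mul_assoc (Xᵀ * G)]
  have h3 : ((Xᵀ * G - Gᵀ * X)ᵀ * (Xᵀ * G - Gᵀ * X)).trace =
      2 * (Xᵀ * G * Gᵀ * X).trace - 2 * (Xᵀ * G * Xᵀ * G).trace := by
    simp only [Matrix.transpose_sub, Matrix.transpose_mul, Matrix.transpose_transpose,
      Matrix.sub_mul, Matrix.mul_sub, Matrix.trace_sub]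
    have e1 : (Gᵀ * X * (Xᵀ * G)).trace = (Xᵀ * G * Gᵀ * X).trace := by
      rw [Matrix.trace_mul_comm (Gᵀ * X) (Xᵀ * G), Matrix.mul_assoc (Xᵀ * G)]
    have e2 : (Gᵀ * X * (Gᵀ * X)).trace = (Xᵀ * G * Xᵀ * G).trace := by
      rw [← Matrix.trace_transpose (Gᵀ * X * (Gᵀ * X))]
      simp only [Matrix.transpose_mul, Matrix.transpose_transpose, Matrix.mul_assoc]
    have e3 : (Xᵀ * G * (Gᵀ * X)).trace = (Xᵀ * G * Gᵀ * X).trace := by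
      rw [Matrix.mul_assoc (Xᵀ * G)]
    have e4 : (Xᵀ * G * (Xᵀ * G)).trace = (Xᵀ * G * Xᵀ * G).trace := by
      rw [Matrix.mul_assoc (Xᵀ * G)]
    rw [e1, e2, e3, e4]; ring
  have e5 : (Gᵀ * (X * Gᵀ * X)).trace = (Xᵀ * G * Xᵀ * G).trace := by
    rw [← Matrix.trace_transpose (Gᵀ * (X * Gᵀ * X))]
    simp only [Matrix.transpose_mul, Matrix.transpose_transpose, Matrix.mul_assoc]
  rw [h1, h2, h3, e5]; ring
end

section
/- Let U, V ∈ R^{p×p} be orthogonal, Σ diagonal with nonnegative entries, Σ̂ = Σ V^T U, Γ = (Σ̂ + Σ̂^T)/2. Then tr(Σ^2) - tr(Γ^2) ≤ 2 ‖Σ‖_2 · tr(Σ + Γ), where ‖Σ‖_2 is the spectral norm (the largest diagonal entry of Σ). -/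
open Matrix

theorem stmt_6 (p : ℕ) (hp : 0 < p) (U V S Sh Γ : Matrix (Fin p) (Fin p) ℝ)
    (hU : Uᵀ * U = 1) (hV : Vᵀ * V = 1)
    (hSd : ∀ i j, i ≠ j → S i j = 0) (hS0 : ∀ i, 0 ≤ S i i)
    (hSh : Sh = S * Vᵀ * U) (hΓ : Γ = ((1 : ℝ) / 2) • (Sh + Shᵀ)) :
    Matrix.trace (S * S) - Matrix.trace (Γ * Γ) ≤
      2 * (Finset.univ.sup' ⟨⟨0, hp⟩, Finset.mem_univ _⟩ fun i => S i i) *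
        Matrix.trace (S + Γ) := by
  set M : ℝ := Finset.univ.sup' ⟨⟨0, hp⟩, Finset.mem_univ _⟩ fun i => S i i with hM
  set W : Matrix (Fin p) (Fin p) ℝ := Vᵀ * U with hW
  -- W is orthogonal
  have hVVt : V * Vᵀ = 1 := mul_eq_one_comm.mp hV
  have hWW : Wᵀ * W = 1 := by
    rw [hW, transpose_mul, transpose_transpose]
    calc Uᵀ * V * (Vᵀ * U) = Uᵀ * (V * Vᵀ) * U := by noncomm_ring
    _ = 1 := by rw [hVVt, mul_one, hU]
  -- diagonal of W bounded by 1
  have hWd : ∀ i, (W i i)^2 ≤ 1 := by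
    intro i
    have h1 : (Wᵀ * W) i i = 1 := by rw [hWW]; simp [Matrix.one_apply]
    have h2 : ∑ k, W k i * W k i = 1 := by
      simpa [Matrix.mul_apply, Matrix.transpose_apply] using h1
    calc (W i i)^2 = W i i * W i i := by ring
    _ ≤ ∑ k, W k i * W k i :=
        Finset.single_le_sum (f := fun k => W k i * W k i)
          (fun k _ => mul_self_nonneg (W k i)) (Finset.mem_univ i)
    _ = 1 := h2
  have hWl : ∀ i, -1 ≤ W i i := fun i => by nlinarith [hWd i, sq_nonneg (W i i + 1)]
  have hWu : ∀ i, W i i ≤ 1 := fun i => by nlinarith [hWd i, sq_nonneg (W i i - 1)]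
  -- Γ is symmetric
  have hΓsym : ∀ i k, Γ k i = Γ i k := by
    intro i k
    rw [hΓ]
    simp [Matrix.add_apply, Matrix.transpose_apply, Matrix.smul_apply]
    ring
  -- diagonal of Γ
  have hShd : ∀ i, Sh i i = S i i * W i i := by
    intro i
    rw [hSh, Matrix.mul_assoc, ← hW, Matrix.mul_apply]
    rw [Finset.sum_eq_single i]
    · intro k _ hk; rw [hSd i k (Ne.symm hk), zero_mul]
    · intro h; exact absurd (Finset.mem_univ i) h
  have hΓd : ∀ i, Γ i i = S i i * W i i := by
    intro i
    rw [hΓ]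
    simp [Matrix.add_apply, Matrix.transpose_apply, Matrix.smul_apply, hShd i]
    ring
  -- |Γ i i| ≤ S i i
  have hΓl : ∀ i, -(S i i) ≤ Γ i i := by
    intro i
    rw [hΓd i]
    nlinarith [mul_le_mul_of_nonneg_left (hWl i) (hS0 i)]
  have hΓu : ∀ i, Γ i i ≤ S i i := by
    intro i
    rw [hΓd i]
    nlinarith [mul_le_mul_of_nonneg_left (hWu i) (hS0 i)]
  -- traces
  have htS : Matrix.trace (S * S) = ∑ i, (S i i)^2 := by
    rw [Matrix.trace]
    apply Finset.sum_congr rfl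
    intro i _
    rw [Matrix.diag_apply, Matrix.mul_apply, Finset.sum_eq_single i]
    · rw [sq]
    · intro k _ hk; rw [hSd i k (Ne.symm hk), zero_mul]
    · intro h; exact absurd (Finset.mem_univ i) h
  have htΓ : ∑ i, (Γ i i)^2 ≤ Matrix.trace (Γ * Γ) := by
    rw [Matrix.trace]
    apply Finset.sum_le_sum
    intro i _
    rw [Matrix.diag_apply, Matrix.mul_apply]
    calc (Γ i i)^2 = Γ i i * Γ i i := by ring
    _ ≤ ∑ k, Γ i k * Γ k i :=
        Finset.single_le_sum (f := fun k => Γ i k * Γ k i)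
          (fun k _ => by show 0 ≤ Γ i k * Γ k i; rw [hΓsym i k]; exact mul_self_nonneg _)
          (Finset.mem_univ i)
  have htSum : Matrix.trace (S + Γ) = ∑ i, (S i i + Γ i i) := by
    rw [Matrix.trace]
    apply Finset.sum_congr rfl
    intro i _
    simp [Matrix.add_apply]
  -- bound on M
  have hSM : ∀ i, S i i ≤ M :=
    fun i => Finset.le_sup' (f := fun i => S i i) (Finset.mem_univ i)
  -- termwise inequality
  have key : ∀ i, (S i i)^2 - (Γ i i)^2 ≤ 2 * M * (S i i + Γ i i) := by
    intro i
    have hprod : (0:ℝ) ≤ (S i i + Γ i i) * (2 * M - S i i + Γ i i) :=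
      mul_nonneg (by linarith [hΓl i]) (by linarith [hΓu i, hSM i, hΓl i])
    nlinarith [hprod]
  calc Matrix.trace (S * S) - Matrix.trace (Γ * Γ)
      ≤ ∑ i, (S i i)^2 - ∑ i, (Γ i i)^2 := by rw [htS]; linarith [htΓ]
    _ = ∑ i, ((S i i)^2 - (Γ i i)^2) := (Finset.sum_sub_distrib _ _).symm
    _ ≤ ∑ i, 2 * M * (S i i + Γ i i) := Finset.sum_le_sum fun i _ => key i
    _ = 2 * M * Matrix.trace (S + Γ) := by rw [htSum, Finset.mul_sum]
end

section
/- Let X̄ ∈ R^{n×p} have orthonormal columns, G ∈ R^{n×p}, γ > 0, and Z = X̄^T G - γ I_p with SVD Z = U Σ V^T. Set Q = -U V^T and X⁺ = X̄ Q. Then ⟨G, X⁺ - X̄⟩ + (γ/2)‖X⁺ - X̄‖_F^2 = -tr(Σ + U Σ V^T) ≤ 0. -/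
open Matrix BigOperators

noncomputable def minner {m n : Type*} [Fintype m] [Fintype n]
    (A B : Matrix m n ℝ) : ℝ := Matrix.trace (Aᵀ * B)

lemma frob_trace {m n : Type*} [Fintype m] [Fintype n] (A : Matrix m n ℝ) :
    frobSq A = Matrix.trace (Aᵀ * A) := by
  simp only [frobSq, Matrix.trace, Matrix.diag, Matrix.mul_apply, Matrix.transpose_apply, sq]
  rw [Finset.sum_comm]

theorem stmt_12 (n p : ℕ) (γ : ℝ) (hγ : 0 < γ)
    (Xb Xp G : Matrix (Fin n) (Fin p) ℝ)
    (U S V : Matrix (Fin p) (Fin p) ℝ)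
    (hXb : Xbᵀ * Xb = 1) (hU : Uᵀ * U = 1) (hV : Vᵀ * V = 1)
    (hSd : ∀ i j, i ≠ j → S i j = 0) (hS0 : ∀ i, 0 ≤ S i i)
    (hZ : Xbᵀ * G - γ • 1 = U * S * Vᵀ)
    (hXp : Xp = Xb * (-(U * Vᵀ))) :
    minner G (Xp - Xb) + (γ / 2) * frobSq (Xp - Xb) =
        -Matrix.trace (S + U * S * Vᵀ) ∧
      -Matrix.trace (S + U * S * Vᵀ) ≤ 0 := by
  have hST : Sᵀ = S := by
    ext i j
    by_cases h : i = j
    · subst h; simp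
    · simp [Matrix.transpose_apply, hSd j i (Ne.symm h), hSd i j h]
  have hVVt : V * Vᵀ = 1 := mul_eq_one_comm.mp hV
  have hXbG : Xbᵀ * G = U * S * Vᵀ + γ • 1 := sub_eq_iff_eq_add.mp hZ
  constructor
  · -- equality
    subst hXp
    have hGXb : Gᵀ * Xb = V * S * Uᵀ + γ • 1 := by
      have := congrArg Matrix.transpose hXbG
      simpa [Matrix.transpose_mul, hST, Matrix.mul_assoc] using this
    -- minner part
    have e2 : (V * S * Uᵀ + γ • 1) * (U * Vᵀ) = V * S * Vᵀ + γ • (U * Vᵀ) := by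
      have h5 : V * S * Uᵀ * (U * Vᵀ) = V * S * Vᵀ := by
        calc V * S * Uᵀ * (U * Vᵀ) = V * S * (Uᵀ * U) * Vᵀ := by
              simp [Matrix.mul_assoc]
          _ = V * S * Vᵀ := by rw [hU]; simp
      rw [add_mul, h5, Matrix.smul_mul, one_mul]
    have e3 : Matrix.trace (V * S * Vᵀ) = Matrix.trace S := by
      rw [Matrix.trace_mul_comm, ← Matrix.mul_assoc, hV, one_mul]
    have e4 : Matrix.trace (V * S * Uᵀ) = Matrix.trace (U * S * Vᵀ) := by
      rw [← Matrix.trace_transpose (V * S * Uᵀ)]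
      simp [Matrix.transpose_mul, hST, Matrix.mul_assoc]
    have h1 : minner G (Xb * (-(U * Vᵀ)) - Xb)
        = -Matrix.trace S - γ * Matrix.trace (U * Vᵀ)
          - Matrix.trace (U * S * Vᵀ) - γ * Matrix.trace (1 : Matrix (Fin p) (Fin p) ℝ) := by
      have e1 : Gᵀ * (Xb * (-(U * Vᵀ)) - Xb) = -(Gᵀ * Xb * (U * Vᵀ)) - Gᵀ * Xb := by
        rw [Matrix.mul_neg, Matrix.mul_sub, Matrix.mul_neg, ← Matrix.mul_assoc]
      rw [minner, e1, hGXb, e2]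
      simp only [Matrix.trace_sub, Matrix.trace_neg, Matrix.trace_add, Matrix.trace_smul,
        e3, e4, smul_eq_mul]
      ring
    -- frob part
    have h2 : frobSq (Xb * (-(U * Vᵀ)) - Xb)
        = 2 * Matrix.trace (1 : Matrix (Fin p) (Fin p) ℝ) + 2 * Matrix.trace (U * Vᵀ) := by
      rw [frob_trace]
      have hfac : Xb * (-(U * Vᵀ)) - Xb = Xb * (-(U * Vᵀ) - 1) := by
        rw [Matrix.mul_sub, Matrix.mul_one]
      have e1 : (Xb * (-(U * Vᵀ) - 1))ᵀ * (Xb * (-(U * Vᵀ) - 1))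
          = (-(U * Vᵀ) - 1)ᵀ * (Xbᵀ * Xb) * (-(U * Vᵀ) - 1) := by
        rw [Matrix.transpose_mul]; simp only [Matrix.mul_assoc]
      rw [hfac, e1, hXb, Matrix.mul_one]
      have e2' : (-(U * Vᵀ) - 1)ᵀ * (-(U * Vᵀ) - 1)
          = (U * Vᵀ)ᵀ * (U * Vᵀ) + (U * Vᵀ)ᵀ + (U * Vᵀ) + 1 := by
        simp only [Matrix.transpose_sub, Matrix.transpose_neg, Matrix.transpose_one,
          sub_mul, mul_sub, one_mul, mul_one, neg_mul_neg]
        abel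
      have e3' : (U * Vᵀ)ᵀ * (U * Vᵀ) = 1 := by
        calc (U * Vᵀ)ᵀ * (U * Vᵀ) = V * (Uᵀ * U) * Vᵀ := by
              simp [Matrix.transpose_mul, Matrix.mul_assoc]
          _ = 1 := by rw [hU]; simp [hVVt]
      rw [e2', e3']
      simp only [Matrix.trace_add, Matrix.trace_transpose]
      ring
    rw [h1, h2, Matrix.trace_add]
    ring
  · -- inequality
    have hcol : ∀ k, -1 ≤ ∑ i, V i k * U i k := by
      intro k
      have hu : ∑ i, U i k ^ 2 = 1 := by
        have h := congrFun (congrFun hU k) k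
        rw [Matrix.mul_apply] at h
        simp only [Matrix.transpose_apply, Matrix.one_apply_eq] at h
        rw [← h]; apply Finset.sum_congr rfl; intro i _; ring
      have hv : ∑ i, V i k ^ 2 = 1 := by
        have h := congrFun (congrFun hV k) k
        rw [Matrix.mul_apply] at h
        simp only [Matrix.transpose_apply, Matrix.one_apply_eq] at h
        rw [← h]; apply Finset.sum_congr rfl; intro i _; ring
      have hcs := Finset.sum_mul_sq_le_sq_mul_sq Finset.univ
        (fun i => V i k) (fun i => U i k)
      rw [hu, hv, mul_one] at hcs
      nlinarith [sq_nonneg ((∑ i, V i k * U i k) + 1)]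
    have htr : Matrix.trace (S + U * S * Vᵀ) = ∑ k, S k k * (1 + ∑ i, V i k * U i k) := by
      have hUS : ∀ i k, (U * S) i k = U i k * S k k := by
        intro i k
        rw [Matrix.mul_apply]
        exact Finset.sum_eq_single k (fun j _ hj => by rw [hSd j k hj, mul_zero]) (by simp)
      have hd : ∀ i, (U * S * Vᵀ) i i = ∑ k, U i k * S k k * V i k := by
        intro i
        rw [Matrix.mul_apply]
        apply Finset.sum_congr rfl
        intro k _
        rw [hUS, Matrix.transpose_apply]
      have e1 : Matrix.trace (U * S * Vᵀ) = ∑ k, S k k * (∑ i, V i k * U i k) := by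
        simp only [Matrix.trace, Matrix.diag, hd]
        rw [Finset.sum_comm]
        apply Finset.sum_congr rfl
        intro k _
        rw [Finset.mul_sum]
        apply Finset.sum_congr rfl
        intro i _
        ring
      rw [Matrix.trace_add, e1, Matrix.trace]
      simp only [Matrix.diag]
      rw [← Finset.sum_add_distrib]
      apply Finset.sum_congr rfl
      intro k _
      ring
    rw [htr]
    have h0 : 0 ≤ ∑ k, S k k * (1 + ∑ i, V i k * U i k) := by
      apply Finset.sum_nonneg
      intro k _
      have := hcol k
      nlinarith [hS0 k]
    linarith
end

section
/- Let X̄ ∈ R^{n×p} have orthonormal columns, G ∈ R^{n×p}, let Z = X̄^T G - γ I_p have SVD U Σ V^T, Q = -U V^T, X⁺ = X̄ Q. Then 8 c_γ · tr(Σ + U Σ V^T) ≥ ‖X̄^T G - G^T X̄‖_F^2, where c_γ = ‖X̄^T G‖_2 + γ (in particular this holds with c_γ = M + γ whenever ‖G‖_2 ≤ M). -/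
open Matrix BigOperators RealInnerProductSpace

attribute [local instance] Matrix.instL2OpNormedAddCommGroup

lemma frobSq_eq_trace_s13 {p : ℕ} (A : Matrix (Fin p) (Fin p) ℝ) :
    frobSq A = Matrix.trace (Aᵀ * A) := by
  unfold frobSq
  rw [Finset.sum_comm]
  simp [Matrix.trace, Matrix.diag, Matrix.mul_apply, sq, Matrix.transpose_apply]

lemma frobSq_conj {p : ℕ} (U M : Matrix (Fin p) (Fin p) ℝ) (hU : Uᵀ * U = 1) :
    frobSq (U * M * Uᵀ) = frobSq M := by
  rw [frobSq_eq_trace_s13, frobSq_eq_trace_s13]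
  have h1 : (U * M * Uᵀ)ᵀ * (U * M * Uᵀ) = U * (Mᵀ * M) * Uᵀ := by
    rw [Matrix.transpose_mul, Matrix.transpose_mul, Matrix.transpose_transpose]
    calc U * (Mᵀ * Uᵀ) * (U * M * Uᵀ) = U * Mᵀ * ((Uᵀ * U) * (M * Uᵀ)) := by
          noncomm_ring
      _ = U * (Mᵀ * M) * Uᵀ := by rw [hU, one_mul]; noncomm_ring
  rw [h1, Matrix.trace_mul_comm, ← mul_assoc, ← mul_assoc, hU, one_mul]

theorem stmt_13 (n p : ℕ) (γ : ℝ) (hγ : 0 < γ)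
    (Xb G : Matrix (Fin n) (Fin p) ℝ)
    (U S V : Matrix (Fin p) (Fin p) ℝ)
    (hXb : Xbᵀ * Xb = 1) (hU : Uᵀ * U = 1) (hV : Vᵀ * V = 1)
    (hSd : ∀ i j, i ≠ j → S i j = 0) (hS0 : ∀ i, 0 ≤ S i i)
    (hZ : Xbᵀ * G - γ • 1 = U * S * Vᵀ) :
    frobSq (Xbᵀ * G - Gᵀ * Xb) ≤
      8 * (‖Xbᵀ * G‖ + γ) * Matrix.trace (S + U * S * Vᵀ) := by
  set A := Xbᵀ * G with hA
  set Z := U * S * Vᵀ with hZdef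
  set W := Vᵀ * U with hWdef
  set c := ‖A‖ + γ with hc
  have hUU : U * Uᵀ = 1 := mul_eq_one_comm.mp hU
  have hVV : V * Vᵀ = 1 := mul_eq_one_comm.mp hV
  have hSsym : Sᵀ = S := by
    ext i j
    by_cases h : i = j
    · subst h; rfl
    · rw [Matrix.transpose_apply, hSd j i (Ne.symm h), hSd i j h]
  -- row and column sums of W
  have hWW : W * Wᵀ = 1 := by
    rw [hWdef, Matrix.transpose_mul, Matrix.transpose_transpose]
    calc Vᵀ * U * (Uᵀ * V) = Vᵀ * (U * Uᵀ) * V := by noncomm_ring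
      _ = 1 := by rw [hUU, mul_one, hV]
  have hWtW : Wᵀ * W = 1 := mul_eq_one_comm.mp hWW
  have hWrow : ∀ i, ∑ j, (W i j) ^ 2 = 1 := by
    intro i
    have := congrFun (congrFun hWW i) i
    simpa [Matrix.mul_apply, Matrix.transpose_apply, sq, Matrix.one_apply] using this
  have hWcol : ∀ i, ∑ j, (W j i) ^ 2 = 1 := by
    intro i
    have := congrFun (congrFun hWtW i) i
    simpa [Matrix.mul_apply, Matrix.transpose_apply, sq, Matrix.one_apply] using this
  have hWd : ∀ i, |W i i| ≤ 1 := by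
    intro i
    have h1 : (W i i) ^ 2 ≤ 1 := by
      rw [← hWrow i]
      exact Finset.single_le_sum (f := fun j => (W i j)^2) (fun j _ => sq_nonneg _) (Finset.mem_univ i)
    nlinarith [sq_abs (W i i), abs_nonneg (W i i)]
  have hc0 : 0 ≤ c := by
    have : (0:ℝ) ≤ ‖A‖ := norm_nonneg _
    rw [hc]; linarith
  -- singular values bounded by c
  have hUcol : ∀ i, ∑ k, (U k i) ^ 2 = 1 := by
    intro i
    have := congrFun (congrFun hU i) i
    simpa [Matrix.mul_apply, Matrix.transpose_apply, sq, Matrix.one_apply] using this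
  have hVcol : ∀ i, ∑ k, (V k i) ^ 2 = 1 := by
    intro i
    have := congrFun (congrFun hV i) i
    simpa [Matrix.mul_apply, Matrix.transpose_apply, sq, Matrix.one_apply] using this
  have hSeq : S = Uᵀ * A * V - γ • (Uᵀ * V) := by
    have h1 : Uᵀ * (A - γ • 1) * V = S := by
      rw [hZ, hZdef]
      calc Uᵀ * (U * S * Vᵀ) * V = (Uᵀ * U) * S * (Vᵀ * V) := by noncomm_ring
        _ = S := by rw [hU, hV, one_mul, mul_one]
    rw [← h1]
    rw [Matrix.mul_sub, Matrix.mul_smul, mul_one, Matrix.sub_mul, Matrix.smul_mul]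
  have hσc : ∀ i, S i i ≤ c := by
    intro i
    have hSi : S i i = (Uᵀ * A * V) i i - γ * (Uᵀ * V) i i := by
      rw [hSeq]; simp [Matrix.sub_apply, Matrix.smul_apply]
    -- |(UᵀV) i i| ≤ 1
    have huv : |(Uᵀ * V) i i| ≤ 1 := by
      have h1 : ((Uᵀ * V) i i) ^ 2 ≤ 1 := by
        have := Finset.sum_mul_sq_le_sq_mul_sq Finset.univ (fun k => U k i) (fun k => V k i)
        rw [hUcol i, hVcol i] at this
        simpa [Matrix.mul_apply, Matrix.transpose_apply] using this
      nlinarith [sq_abs ((Uᵀ * V) i i), abs_nonneg ((Uᵀ * V) i i)]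
    -- |(Uᵀ A V) i i| ≤ ‖A‖
    have huav : |(Uᵀ * A * V) i i| ≤ ‖A‖ := by
      set u : EuclideanSpace ℝ (Fin p) := WithLp.toLp 2 (fun k => U k i) with hu
      set v : EuclideanSpace ℝ (Fin p) := WithLp.toLp 2 (fun k => V k i) with hv
      have hnu : ‖u‖ = 1 := by
        rw [EuclideanSpace.norm_eq]
        have : ∑ k, ‖u k‖ ^ 2 = 1 := by
          simpa [hu, Real.norm_eq_abs, sq_abs] using hUcol i
        rw [this, Real.sqrt_one]
      have hnv : ‖v‖ = 1 := by
        rw [EuclideanSpace.norm_eq]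
        have : ∑ k, ‖v k‖ ^ 2 = 1 := by
          simpa [hv, Real.norm_eq_abs, sq_abs] using hVcol i
        rw [this, Real.sqrt_one]
      set w : EuclideanSpace ℝ (Fin p) := (EuclideanSpace.equiv (Fin p) ℝ).symm (A *ᵥ v) with hw
      have hwb : ‖w‖ ≤ ‖A‖ := by
        have := Matrix.l2_opNorm_mulVec A v
        rw [hnv, mul_one] at this
        exact this
      have hip : (Uᵀ * A * V) i i = ⟪u, w⟫ := by
        have hwk : ∀ k, w k = ∑ l, A k l * v l := fun k => rfl
        have huk : ∀ k, u k = U k i := fun k => rfl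
        have hvk : ∀ k, v k = V k i := fun k => rfl
        simp only [PiLp.inner_apply, RCLike.inner_apply, starRingEnd_apply, star_trivial,
          hwk, huk, hvk, Matrix.mul_apply, Matrix.transpose_apply]
        simp only [Finset.sum_mul, Finset.mul_sum]
        rw [Finset.sum_comm]
        refine Finset.sum_congr rfl fun k _ => Finset.sum_congr rfl fun l _ => ?_
        ring
      calc |(Uᵀ * A * V) i i| = |⟪u, w⟫| := by rw [hip]
        _ ≤ ‖u‖ * ‖w‖ := abs_real_inner_le_norm u w
        _ ≤ ‖A‖ := by rw [hnu, one_mul]; exact hwb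
    rw [hSi, hc]
    have h2 : γ * (Uᵀ * V) i i ≥ -γ := by
      have := (abs_le.mp huv).1
      nlinarith
    have h3 := (abs_le.mp huav).2
    linarith
  -- LHS as sum over skew entries
  have hmain : Xbᵀ * G - Gᵀ * Xb = U * (S * W - Wᵀ * S) * Uᵀ := by
    have hAZ : A = Z + γ • 1 := by rw [← hZ]; abel
    have hAt : Aᵀ = Zᵀ + γ • 1 := by
      rw [hAZ, Matrix.transpose_add, Matrix.transpose_smul, Matrix.transpose_one]
    have hGX : Gᵀ * Xb = Aᵀ := by rw [hA, Matrix.transpose_mul, Matrix.transpose_transpose]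
    have h1 : U * (S * W) * Uᵀ = Z := by
      rw [hWdef, hZdef]
      calc U * (S * (Vᵀ * U)) * Uᵀ = (U * S * Vᵀ) * (U * Uᵀ) := by noncomm_ring
        _ = U * S * Vᵀ := by rw [hUU, mul_one]
    have h2 : U * (Wᵀ * S) * Uᵀ = Zᵀ := by
      have hZt : Zᵀ = V * S * Uᵀ := by
        rw [hZdef, Matrix.transpose_mul, Matrix.transpose_mul, Matrix.transpose_transpose,
          hSsym, mul_assoc]
      rw [hWdef, hZt, Matrix.transpose_mul, Matrix.transpose_transpose]
      calc U * (Uᵀ * V * S) * Uᵀ = (U * Uᵀ) * (V * S * Uᵀ) := by noncomm_ring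
        _ = V * S * Uᵀ := by rw [hUU, one_mul]
    rw [← hA, hAZ, hGX, hAt]
    rw [Matrix.mul_sub, Matrix.sub_mul, h1, h2]
    abel
  have hentry : ∀ i j, (S * W - Wᵀ * S) i j = S i i * W i j - S j j * W j i := by
    intro i j
    rw [Matrix.sub_apply, Matrix.mul_apply, Matrix.mul_apply]
    congr 1
    · exact Finset.sum_eq_single i (fun k _ hk => by rw [hSd i k (Ne.symm hk), zero_mul])
        (fun h => absurd (Finset.mem_univ i) h)
    · rw [Finset.sum_eq_single j (fun k _ hk => by
        rw [Matrix.transpose_apply, hSd k j hk, mul_zero])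
        (fun h => absurd (Finset.mem_univ j) h)]
      rw [Matrix.transpose_apply]; ring
  have hLHS : frobSq (Xbᵀ * G - Gᵀ * Xb)
      = ∑ i, ∑ j, (S i i * W i j - S j j * W j i) ^ 2 := by
    rw [hmain, frobSq_conj U _ hU]
    unfold frobSq
    exact Finset.sum_congr rfl fun i _ => Finset.sum_congr rfl fun j _ => by rw [hentry]
  -- RHS trace
  have hRHS : Matrix.trace (S + Z) = ∑ i, S i i * (1 + W i i) := by
    rw [Matrix.trace_add]
    have htZ : Matrix.trace Z = ∑ i, S i i * W i i := by
      have h1 : Matrix.trace Z = Matrix.trace (W * S) := by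
        rw [hZdef, hWdef, Matrix.trace_mul_comm, ← mul_assoc]
      rw [h1, Matrix.trace]
      refine Finset.sum_congr rfl fun i _ => ?_
      rw [Matrix.diag_apply, Matrix.mul_apply]
      rw [Finset.sum_eq_single i (fun k _ hk => by rw [hSd k i hk, mul_zero])
        (fun h => absurd (Finset.mem_univ i) h)]
      ring
    rw [htZ, Matrix.trace, ← Finset.sum_add_distrib]
    refine Finset.sum_congr rfl fun i _ => ?_
    rw [Matrix.diag_apply]; ring
  rw [hLHS, hRHS]
  -- main inequality
  have key : ∀ i j, (S i i * W i j - S j j * W j i) ^ 2 ≤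
      (if i = j then 0 else 2 * (S i i)^2 * (W i j)^2) +
      (if i = j then 0 else 2 * (S j j)^2 * (W j i)^2) := by
    intro i j
    by_cases h : i = j
    · subst h; simp
    · simp only [if_neg h]
      nlinarith [sq_nonneg (S i i * W i j + S j j * W j i)]
  have swap : ∑ i, ∑ j, (if i = j then 0 else 2 * (S j j)^2 * (W j i)^2)
      = ∑ i, ∑ j, (if i = j then 0 else 2 * (S i i)^2 * (W i j)^2) := by
    rw [Finset.sum_comm]
    refine Finset.sum_congr rfl fun i _ => Finset.sum_congr rfl fun j _ => ?_
    by_cases h : i = j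
    · subst h; simp
    · rw [if_neg h, if_neg (Ne.symm h)]
  have inner_sum : ∀ i, ∑ j, (if i = j then 0 else 2 * (S i i)^2 * (W i j)^2)
      = 2 * (S i i)^2 * (1 - (W i i)^2) := by
    intro i
    have h1 : ∀ j, (if i = j then 0 else 2 * (S i i)^2 * (W i j)^2)
        = 2 * (S i i)^2 * (W i j)^2 - (if i = j then 2 * (S i i)^2 * (W i j)^2 else 0) := by
      intro j; by_cases h : i = j <;> simp [h]
    rw [Finset.sum_congr rfl (fun j _ => h1 j), Finset.sum_sub_distrib,
      Finset.sum_ite_eq Finset.univ i (fun j => 2 * (S i i)^2 * (W i j)^2),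
      if_pos (Finset.mem_univ i), ← Finset.mul_sum, hWrow i]
    ring
  calc ∑ i, ∑ j, (S i i * W i j - S j j * W j i) ^ 2
      ≤ ∑ i, ∑ j, ((if i = j then 0 else 2 * (S i i)^2 * (W i j)^2) +
          (if i = j then 0 else 2 * (S j j)^2 * (W j i)^2)) := by
        refine Finset.sum_le_sum fun i _ => Finset.sum_le_sum fun j _ => key i j
    _ = ∑ i, 4 * (S i i)^2 * (1 - (W i i)^2) := by
        simp only [Finset.sum_add_distrib]
        rw [swap, ← Finset.sum_add_distrib]
        refine Finset.sum_congr rfl fun i _ => ?_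
        rw [inner_sum i]; ring
    _ ≤ ∑ i, 8 * c * (S i i * (1 + W i i)) := by
        refine Finset.sum_le_sum fun i _ => ?_
        have h1 := hσc i
        have h2 := hS0 i
        have h3 := abs_le.mp (hWd i)
        nlinarith [mul_nonneg (mul_nonneg (mul_nonneg h2 (by linarith [h3.1] : (0:ℝ) ≤ 1 + W i i))
          (by linarith [h3.2] : (0:ℝ) ≤ 1 - W i i)) (by linarith : (0:ℝ) ≤ c - S i i),
          mul_nonneg (mul_nonneg h2 (by linarith [h3.1] : (0:ℝ) ≤ 1 + W i i)) hc0]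
    _ = 8 * c * ∑ i, S i i * (1 + W i i) := by rw [Finset.mul_sum]
end
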